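/- Every stationary reversible finite Markov chain {Z_t} and every map f from the state space to ℝ satisfy E[(f(Z_t) - f(Z_0))²] ≤ t · E[(f(Z_1) - f(Z_0))²] for all t ≥ 1; i.e., the real line has Markov type 2 with constant 1. -/
import Mathlib

open Finset

namespace MarkovTypeAux

variable {n : ℕ}

/-- weighted (semi) inner product -/
def ip (π : Fin n → ℝ) (u v : Fin n → ℝ) : ℝ := ∑ i, π i * (u i * v i)

lemma ip_symm (π u v : Fin n → ℝ) : ip π u v = ip π v u := by
  unfold ip; exact Finset.sum_congr rfl fun i _ => by ring

lemma ip_self_nonneg (π : Fin n → ℝ) (hπ0 : ∀ i, 0 ≤ π i) (u : Fin n → ℝ) :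
    0 ≤ ip π u u := by
  unfold ip
  exact Finset.sum_nonneg fun i _ => by
    rw [← sq]; exact mul_nonneg (hπ0 i) (sq_nonneg _)

lemma ip_mulVec (π : Fin n → ℝ) (B : Matrix (Fin n) (Fin n) ℝ) (u v : Fin n → ℝ) :
    ip π u (B.mulVec v) = ∑ i, ∑ j, (π i * B i j) * (u i * v j) := by
  unfold ip Matrix.mulVec dotProduct
  refine Finset.sum_congr rfl fun i _ => ?_
  rw [Finset.mul_sum, Finset.mul_sum]
  exact Finset.sum_congr rfl fun j _ => by ring

lemma adj (π : Fin n → ℝ) (A : Matrix (Fin n) (Fin n) ℝ)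
    (hrev : ∀ i j, π i * A i j = π j * A j i) (u v : Fin n → ℝ) :
    ip π u (A.mulVec v) = ip π v (A.mulVec u) := by
  rw [ip_mulVec, ip_mulVec, Finset.sum_comm]
  refine Finset.sum_congr rfl fun j _ => Finset.sum_congr rfl fun i _ => ?_
  rw [hrev i j]; ring

lemma adjpow (π : Fin n → ℝ) (A : Matrix (Fin n) (Fin n) ℝ)
    (hrev : ∀ i j, π i * A i j = π j * A j i) (k : ℕ) (u v : Fin n → ℝ) :
    ip π u ((A ^ k).mulVec v) = ip π v ((A ^ k).mulVec u) := by
  induction k generalizing u v with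
  | zero => simp [Matrix.one_mulVec, ip_symm]
  | succ k ih =>
      calc ip π u ((A ^ (k+1)).mulVec v)
          = ip π u ((A ^ k).mulVec (A.mulVec v)) := by
            rw [pow_succ, ← Matrix.mulVec_mulVec]
        _ = ip π (A.mulVec v) ((A ^ k).mulVec u) := ih _ _
        _ = ip π ((A ^ k).mulVec u) (A.mulVec v) := ip_symm _ _ _
        _ = ip π v (A.mulVec ((A ^ k).mulVec u)) := adj π A hrev _ _
        _ = ip π v ((A ^ (k+1)).mulVec u) := by
            rw [Matrix.mulVec_mulVec, ← pow_succ']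

lemma ip_sub_sub (π u u' v v' : Fin n → ℝ) :
    ip π (u - u') (v - v') = ip π u v - ip π u v' - ip π u' v + ip π u' v' := by
  unfold ip
  rw [← Finset.sum_sub_distrib, ← Finset.sum_sub_distrib, ← Finset.sum_add_distrib]
  exact Finset.sum_congr rfl fun i _ => by simp [Pi.sub_apply]; ring

lemma rowsum_pow (A : Matrix (Fin n) (Fin n) ℝ) (hA1 : ∀ i, ∑ j, A i j = 1) :
    ∀ (k : ℕ) (i), ∑ j, (A ^ k) i j = 1 := by
  intro k
  induction k with
  | zero => intro i; simp [Matrix.one_apply, Finset.sum_ite_eq]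
  | succ k ih =>
      intro i
      have h : ∀ j, (A ^ (k+1)) i j = ∑ l, (A ^ k) i l * A l j := by
        intro j; rw [pow_succ]; rfl
      rw [Finset.sum_congr rfl fun j _ => h j, Finset.sum_comm]
      calc ∑ l, ∑ j, (A ^ k) i l * A l j = ∑ l, (A ^ k) i l * ∑ j, A l j := by
            exact Finset.sum_congr rfl fun l _ => (Finset.mul_sum _ _ _).symm
        _ = 1 := by simp [hA1]; exact ih i

lemma stat_pow (π : Fin n → ℝ) (A : Matrix (Fin n) (Fin n) ℝ)
    (hstat : ∀ j, ∑ i, π i * A i j = π j) :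
    ∀ (k : ℕ) (j), ∑ i, π i * (A ^ k) i j = π j := by
  intro k
  induction k with
  | zero => intro j; simp [Matrix.one_apply, mul_ite, Finset.sum_ite_eq]
  | succ k ih =>
      intro j
      have h : ∀ i, (A ^ (k+1)) i j = ∑ l, (A ^ k) i l * A l j := by
        intro i; rw [pow_succ]; rfl
      calc ∑ i, π i * (A ^ (k+1)) i j
          = ∑ i, ∑ l, (π i * (A ^ k) i l) * A l j := by
            refine Finset.sum_congr rfl fun i _ => ?_
            rw [h i, Finset.mul_sum]
            exact Finset.sum_congr rfl fun l _ => by ring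
        _ = ∑ l, (∑ i, π i * (A ^ k) i l) * A l j := by
            rw [Finset.sum_comm]
            exact Finset.sum_congr rfl fun l _ => (Finset.sum_mul _ _ _).symm
        _ = π j := by
            rw [Finset.sum_congr rfl fun l _ => by rw [ih l]]
            exact hstat j

lemma energy_eq (π : Fin n → ℝ) (B : Matrix (Fin n) (Fin n) ℝ)
    (hB1 : ∀ i, ∑ j, B i j = 1) (hBstat : ∀ j, ∑ i, π i * B i j = π j)
    (f : Fin n → ℝ) :
    ∑ i, ∑ j, π i * B i j * (f i - f j) ^ 2
      = 2 * (ip π f f - ip π f (B.mulVec f)) := by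
  have e1 : ∑ i, ∑ j, π i * B i j * (f i) ^ 2 = ip π f f := by
    unfold ip
    refine Finset.sum_congr rfl fun i _ => ?_
    rw [← Finset.sum_mul, ← Finset.mul_sum, hB1 i]
    ring
  have e2 : ∑ i, ∑ j, π i * B i j * (f j) ^ 2 = ip π f f := by
    rw [Finset.sum_comm]
    unfold ip
    refine Finset.sum_congr rfl fun j _ => ?_
    calc ∑ i, π i * B i j * f j ^ 2 = (∑ i, π i * B i j) * f j ^ 2 :=
          (Finset.sum_mul _ _ _).symm
      _ = π j * (f j * f j) := by rw [hBstat j]; ring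
  have e3 : ∑ i, ∑ j, π i * B i j * (f i * f j) = ip π f (B.mulVec f) := by
    unfold ip Matrix.mulVec dotProduct
    refine Finset.sum_congr rfl fun i _ => ?_
    rw [Finset.mul_sum, Finset.mul_sum]
    exact Finset.sum_congr rfl fun j _ => by ring
  calc ∑ i, ∑ j, π i * B i j * (f i - f j) ^ 2
      = ∑ i, ∑ j, (π i * B i j * (f i) ^ 2 - 2 * (π i * B i j * (f i * f j))
          + π i * B i j * (f j) ^ 2) := by
        exact Finset.sum_congr rfl fun i _ => Finset.sum_congr rfl fun j _ => by ring
    _ = 2 * (ip π f f - ip π f (B.mulVec f)) := by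
        simp only [Finset.sum_add_distrib, Finset.sum_sub_distrib, ← Finset.mul_sum]
        rw [e1, e2, e3]; ring

lemma plus_form_nonneg (π : Fin n → ℝ) (A : Matrix (Fin n) (Fin n) ℝ)
    (hπ0 : ∀ i, 0 ≤ π i) (hA0 : ∀ i j, 0 ≤ A i j)
    (hA1 : ∀ i, ∑ j, A i j = 1) (hstat : ∀ j, ∑ i, π i * A i j = π j)
    (u : Fin n → ℝ) :
    0 ≤ ip π u u + ip π u (A.mulVec u) := by
  have key : 2 * (ip π u u + ip π u (A.mulVec u))
      = ∑ i, ∑ j, π i * A i j * (u i + u j) ^ 2 := by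
    have e1 : ∑ i, ∑ j, π i * A i j * (u i) ^ 2 = ip π u u := by
      unfold ip
      refine Finset.sum_congr rfl fun i _ => ?_
      rw [← Finset.sum_mul, ← Finset.mul_sum, hA1 i]
      ring
    have e2 : ∑ i, ∑ j, π i * A i j * (u j) ^ 2 = ip π u u := by
      rw [Finset.sum_comm]
      unfold ip
      refine Finset.sum_congr rfl fun j _ => ?_
      calc ∑ i, π i * A i j * u j ^ 2 = (∑ i, π i * A i j) * u j ^ 2 :=
            (Finset.sum_mul _ _ _).symm
        _ = π j * (u j * u j) := by rw [hstat j]; ring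
    have e3 : ∑ i, ∑ j, π i * A i j * (u i * u j) = ip π u (A.mulVec u) := by
      unfold ip Matrix.mulVec dotProduct
      refine Finset.sum_congr rfl fun i _ => ?_
      rw [Finset.mul_sum, Finset.mul_sum]
      exact Finset.sum_congr rfl fun j _ => by ring
    calc 2 * (ip π u u + ip π u (A.mulVec u))
        = ∑ i, ∑ j, π i * A i j * (u i) ^ 2
          + 2 * ∑ i, ∑ j, π i * A i j * (u i * u j)
          + ∑ i, ∑ j, π i * A i j * (u j) ^ 2 := by rw [e1, e2, e3]; ring
      _ = ∑ i, ∑ j, π i * A i j * (u i + u j) ^ 2 := by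
          simp only [Finset.mul_sum, ← Finset.sum_add_distrib]
          exact Finset.sum_congr rfl fun i _ => Finset.sum_congr rfl fun j _ => by ring
  have h2 : 0 ≤ 2 * (ip π u u + ip π u (A.mulVec u)) := by
    rw [key]
    exact Finset.sum_nonneg fun i _ => Finset.sum_nonneg fun j _ =>
      mul_nonneg (mul_nonneg (hπ0 i) (hA0 i j)) (sq_nonneg _)
  linarith

end MarkovTypeAux

open MarkovTypeAux in
/-- The real line has Markov type 2 with constant 1: for every stationary reversible
finite Markov chain (transition matrix `A`, stationary distribution `π`) and every
`f : {1,…,n} → ℝ`, `E (f(Z_t) - f(Z_0))² ≤ t · E (f(Z_1) - f(Z_0))²` for all `t ≥ 1`. -/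
theorem real_line_markov_type_two
    (n : ℕ) (π : Fin n → ℝ) (A : Matrix (Fin n) (Fin n) ℝ)
    (hπ0 : ∀ i, 0 ≤ π i) (hπ1 : ∑ i, π i = 1)
    (hA0 : ∀ i j, 0 ≤ A i j) (hA1 : ∀ i, ∑ j, A i j = 1)
    (hstat : ∀ j, ∑ i, π i * A i j = π j)
    (hrev : ∀ i j, π i * A i j = π j * A j i)
    (f : Fin n → ℝ) (t : ℕ) (ht : 1 ≤ t) :
    ∑ i, ∑ j, π i * (A ^ t) i j * (f i - f j) ^ 2 ≤
      (t : ℝ) * ∑ i, ∑ j, π i * A i j * (f i - f j) ^ 2 := by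
  set c : ℕ → ℝ := fun k => ip π f ((A ^ k).mulVec f) with hc
  set g : Fin n → ℝ := f - A.mulVec f with hg
  set b : ℕ → ℝ := fun j => ip π g ((A ^ j).mulVec g) with hb
  -- ip of A-power shifted by one application of A
  have shift : ∀ k : ℕ, ip π (A.mulVec f) ((A ^ k).mulVec f) = c (k + 1) := by
    intro k
    rw [ip_symm, adj π A hrev, Matrix.mulVec_mulVec, ← pow_succ']
  have b_eq : ∀ j : ℕ, b j = c j - 2 * c (j + 1) + c (j + 2) := by
    intro j
    have hAg : (A ^ j).mulVec g = (A ^ j).mulVec f - (A ^ (j + 1)).mulVec f := by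
      rw [hg, Matrix.mulVec_sub, Matrix.mulVec_mulVec, ← pow_succ]
    have : b j = ip π (f - A.mulVec f) ((A ^ j).mulVec f - (A ^ (j + 1)).mulVec f) := by
      rw [hb, ← hAg, hg]
    rw [this, ip_sub_sub, shift j, shift (j + 1)]
    simp only [hc]
    ring
  -- telescoping
  have Dk : ∀ k : ℕ, c k - c (k + 1) = (c 0 - c 1) - ∑ j ∈ Finset.range k, b j := by
    intro k
    induction k with
    | zero => simp
    | succ k ih =>
        rw [Finset.sum_range_succ]
        have := b_eq k
        linarith
  -- nonnegativity of partial sums of b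
  have beven : ∀ m : ℕ, 0 ≤ b (2 * m) := by
    intro m
    have : b (2 * m) = ip π ((A ^ m).mulVec g) ((A ^ m).mulVec g) := by
      simp only [hb]
      have h2m : A ^ (2 * m) = A ^ m * A ^ m := by rw [two_mul, pow_add]
      rw [h2m, ← Matrix.mulVec_mulVec, adjpow π A hrev]
    rw [this]
    exact ip_self_nonneg π hπ0 _
  have bpair : ∀ m : ℕ, 0 ≤ b (2 * m) + b (2 * m + 1) := by
    intro m
    set h : Fin n → ℝ := (A ^ m).mulVec g with hh
    have e0 : b (2 * m) = ip π h h := by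
      simp only [hb]
      have h2m : A ^ (2 * m) = A ^ m * A ^ m := by rw [two_mul, pow_add]
      rw [h2m, ← Matrix.mulVec_mulVec, adjpow π A hrev, hh]
    have e1 : b (2 * m + 1) = ip π h (A.mulVec h) := by
      simp only [hb]
      have h2m1 : A ^ (2 * m + 1) = A ^ m * A ^ (m + 1) := by
        rw [← pow_add]; ring_nf
      rw [h2m1, ← Matrix.mulVec_mulVec, adjpow π A hrev, ip_symm, hh,
        pow_succ', ← Matrix.mulVec_mulVec]
    rw [e0, e1]
    exact plus_form_nonneg π A hπ0 hA0 hA1 hstat h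
  have Seven : ∀ m : ℕ, 0 ≤ ∑ j ∈ Finset.range (2 * m), b j := by
    intro m
    induction m with
    | zero => simp
    | succ m ih =>
        have h2 : 2 * (m + 1) = 2 * m + 1 + 1 := by ring
        rw [h2, Finset.sum_range_succ, Finset.sum_range_succ]
        have := bpair m
        linarith
  have Snonneg : ∀ k : ℕ, 0 ≤ ∑ j ∈ Finset.range k, b j := by
    intro k
    rcases Nat.even_or_odd k with ⟨m, hm⟩ | ⟨m, hm⟩
    · have : k = 2 * m := by omega
      rw [this]; exact Seven m
    · rw [hm, Finset.sum_range_succ]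
      have := Seven m
      have := beven m
      linarith
  -- main inequality on c
  have cle : c 0 - c t ≤ (t : ℝ) * (c 0 - c 1) := by
    have tele : ∑ k ∈ Finset.range t, (c k - c (k + 1)) = c 0 - c t :=
      Finset.sum_range_sub' c t
    calc c 0 - c t = ∑ k ∈ Finset.range t, (c k - c (k + 1)) := tele.symm
      _ ≤ ∑ _k ∈ Finset.range t, (c 0 - c 1) := by
          refine Finset.sum_le_sum fun k _ => ?_
          rw [Dk k]
          have := Snonneg k
          linarith
      _ = (t : ℝ) * (c 0 - c 1) := by
          rw [Finset.sum_const, Finset.card_range, nsmul_eq_mul]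
  -- rewrite both sides via energy_eq
  have LHSeq : ∑ i, ∑ j, π i * (A ^ t) i j * (f i - f j) ^ 2
      = 2 * (c 0 - c t) := by
    rw [energy_eq π (A ^ t) (rowsum_pow A hA1 t) (stat_pow π A hstat t) f]
    have : c 0 = ip π f f := by
      simp only [hc, pow_zero, Matrix.one_mulVec]
    rw [this, hc]
  have RHSeq : ∑ i, ∑ j, π i * A i j * (f i - f j) ^ 2 = 2 * (c 0 - c 1) := by
    rw [energy_eq π A hA1 hstat f]
    have h0 : c 0 = ip π f f := by
      simp only [hc, pow_zero, Matrix.one_mulVec]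
    have h1 : c 1 = ip π f (A.mulVec f) := by
      simp only [hc, pow_one]
    rw [h0, h1]
  rw [LHSeq, RHSeq]
  have : (t : ℝ) * (2 * (c 0 - c 1)) = 2 * ((t : ℝ) * (c 0 - c 1)) := by ring
  rw [this]
  linarith
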